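/- Let D₁, D₂, Dᵢ be t-structures on a triangulated category with D₁^{≤0} ⊆ Dᵢ^{≤0} ⊆ D₂^{≤0}, and set H = D₁^{≥1} ∩ D₂^{≤0}. Then Dᵢ^{≤0} = D₁^{≤0} ∗ (Dᵢ^{≤0} ∩ H) and Dᵢ^{≥1} = (Dᵢ^{≥1} ∩ H) ∗ D₂^{≥1}. -/

import Mathlib

open CategoryTheory Category Limits Pretriangulated Triangulated

variable {C : Type*} [Category C] [Preadditive C] [HasZeroObject C] [HasShift C ℤ]
  [∀ (n : ℤ), (shiftFunctor C n).Additive] [Pretriangulated C] [IsTriangulated C]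

/-- `ExtStar S T` is the class of objects `Z` fitting in a distinguished triangle
`A → Z → B → A⟦1⟧` with `A ∈ S` and `B ∈ T`. -/
def ExtStar (S T : C → Prop) : C → Prop := fun Z =>
  ∃ (A B : C) (_ : S A) (_ : T B) (f : A ⟶ Z) (g : Z ⟶ B) (h : B ⟶ A⟦(1 : ℤ)⟧),
    Triangle.mk f g h ∈ distTriang C

namespace TStructureAux

variable (t : TStructure C)

lemma le_shift_one {A : C} (hA : t.le 0 A) : t.le 0 (A⟦(1 : ℤ)⟧) :=
  t.le_monotone (by omega) _ (t.le_shift 0 1 (-1) (by omega) A hA)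

lemma ge_shift_neg_one {B : C} (hB : t.ge 1 B) : t.ge 1 (B⟦(-1 : ℤ)⟧) :=
  t.ge_antitone (by omega) _ (t.ge_shift 1 (-1) 2 (by omega) B hB)

/-- If the first map of a distinguished triangle vanishes and all maps
`obj₁ ⟶ obj₃⟦-1⟧` vanish, then `obj₁` is zero. -/
lemma isZero₁ {T : Triangle C} (hT : T ∈ distTriang C) (h1 : T.mor₁ = 0)
    (h : ∀ f : T.obj₁ ⟶ T.obj₃⟦(-1 : ℤ)⟧, f = 0) : IsZero T.obj₁ := by
  rw [IsZero.iff_id_eq_zero]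
  obtain ⟨g, hg⟩ := Triangle.coyoneda_exact₂ _ (inv_rot_of_distTriang _ hT)
    (𝟙 T.obj₁) (by exact (id_comp _).trans h1)
  rw [hg, h g]; exact zero_comp

/-- `LE 0` is closed under extensions. -/
lemma le_ext {T : Triangle C} (hT : T ∈ distTriang C) (hA : t.le 0 T.obj₁)
    (hB : t.le 0 T.obj₃) : t.le 0 T.obj₂ := by
  obtain ⟨X, Y, hX, hY, f, g, h, mem⟩ := t.exists_triangle_zero_one T.obj₂
  have hg : g = 0 := by
    obtain ⟨ψ, hψ⟩ := Triangle.yoneda_exact₂ _ hT g (t.zero' _ hA hY)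
    rw [hψ, t.zero' ψ hB hY, comp_zero]
  have hZY : IsZero Y := by
    rw [IsZero.iff_id_eq_zero]
    obtain ⟨ψ, hψ⟩ := Triangle.yoneda_exact₂ _ (rot_of_distTriang _ mem)
      (𝟙 Y) (by exact (comp_id _).trans hg)
    rw [hψ, t.zero' ψ (le_shift_one t hX) hY]; exact comp_zero
  have : IsIso ((Triangle.mk f g h).mor₁) :=
    (Triangle.isZero₃_iff_isIso₁ _ mem).1 hZY
  exact (t.le 0).prop_of_iso (@asIso _ _ _ _ ((Triangle.mk f g h).mor₁) this) hX

/-- `GE 1` is closed under extensions. -/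
lemma ge_ext {T : Triangle C} (hT : T ∈ distTriang C) (hA : t.ge 1 T.obj₁)
    (hB : t.ge 1 T.obj₃) : t.ge 1 T.obj₂ := by
  obtain ⟨X, Y, hX, hY, f, g, h, mem⟩ := t.exists_triangle_zero_one T.obj₂
  have hf : f = 0 := by
    obtain ⟨ψ, hψ⟩ := Triangle.coyoneda_exact₂ _ hT f (t.zero' _ hX hB)
    rw [hψ, t.zero' ψ hX hA, zero_comp]
  have hZX : IsZero X := isZero₁ mem hf
    (fun ψ => t.zero' ψ hX (ge_shift_neg_one t hY))
  have : IsIso ((Triangle.mk f g h).mor₂) :=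
    (Triangle.isZero₁_iff_isIso₂ _ mem).1 hZX
  exact (t.ge 1).prop_of_iso (@asIso _ _ _ _ ((Triangle.mk f g h).mor₂) this).symm hY

/-- If `t.le 0 ≤ t'.le 0` then `t'.ge 1 ≤ t.ge 1`. -/
lemma ge_mono {t t' : TStructure C} (h : t.le 0 ≤ t'.le 0) :
    t'.ge 1 ≤ t.ge 1 := by
  intro Z hZ
  obtain ⟨X, Y, hX, hY, f, g, h', mem⟩ := t.exists_triangle_zero_one Z
  have hf : f = 0 := t'.zero' f (h _ hX) hZ
  have hZX : IsZero X := isZero₁ mem hf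
    (fun ψ => t.zero' ψ hX (ge_shift_neg_one t hY))
  have : IsIso ((Triangle.mk f g h').mor₂) :=
    (Triangle.isZero₁_iff_isIso₂ _ mem).1 hZX
  exact (t.ge 1).prop_of_iso (@asIso _ _ _ _ ((Triangle.mk f g h').mor₂) this).symm hY

end TStructureAux

open TStructureAux

/-- For t-structures `t₁ ≤ tᵢ ≤ t₂` and `H = D₁^{≥1} ∩ D₂^{≤0}`, one has
`Dᵢ^{≤0} = D₁^{≤0} ∗ (Dᵢ^{≤0} ∩ H)` and `Dᵢ^{≥1} = (Dᵢ^{≥1} ∩ H) ∗ D₂^{≥1}`. -/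
theorem stmt_7 (t₁ t₂ tᵢ : TStructure C)
    (h₁ : t₁.le 0 ≤ tᵢ.le 0) (h₂ : tᵢ.le 0 ≤ t₂.le 0) :
    tᵢ.le 0 = ExtStar (t₁.le 0) (fun X => tᵢ.le 0 X ∧ (t₁.ge 1 X ∧ t₂.le 0 X)) ∧
    tᵢ.ge 1 = ExtStar (fun X => tᵢ.ge 1 X ∧ (t₁.ge 1 X ∧ t₂.le 0 X)) (t₂.ge 1) := by
  constructor
  · funext Z
    apply propext
    constructor
    · intro hZ
      obtain ⟨A, B, hA, hB, f, g, h, mem⟩ := t₁.exists_triangle_zero_one Z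
      have hB' : tᵢ.le 0 B :=
        le_ext tᵢ (rot_of_distTriang _ mem) hZ (le_shift_one tᵢ (h₁ _ hA))
      exact ⟨A, B, hA, ⟨hB', hB, h₂ _ hB'⟩, f, g, h, mem⟩
    · rintro ⟨A, B, hA, hB, f, g, h, mem⟩
      exact le_ext tᵢ mem (h₁ _ hA) hB.1
  · funext Z
    apply propext
    constructor
    · intro hZ
      obtain ⟨A, B, hA, hB, f, g, h, mem⟩ := t₂.exists_triangle_zero_one Z
      have hA' : tᵢ.ge 1 A :=
        ge_ext tᵢ (inv_rot_of_distTriang _ mem)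
          (ge_shift_neg_one tᵢ (ge_mono h₂ _ hB)) hZ
      exact ⟨A, B, ⟨hA', ge_mono h₁ _ hA', hA⟩, hB, f, g, h, mem⟩
    · rintro ⟨A, B, hA, hB, f, g, h, mem⟩
      exact ge_ext tᵢ mem hA.1 (ge_mono h₂ _ hB)
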